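/- Let R be a commutative integral domain with fraction field K, and C_s, C₀ ∈ K^{m×n}, P ∈ K^{n×m}, with P₀ = P(I-C_sP)⁻¹. If C_s stabilizes P and C₀ stabilizes P₀, then C_s + C₀ stabilizes P, i.e. all four closed-loop transfer matrices of the pair (P, C_s+C₀) have entries in R. -/
import Mathlib


open Matrix

/-- A matrix over the fraction field is *stable* if all its entries lie in `R`. -/
def MatStable (R : Type*) [CommRing R] [IsDomain R] {α β : Type*}
    (M : Matrix α β (FractionRing R)) : Prop :=
  ∀ i j, ∃ r : R, algebraMap R (FractionRing R) r = M i j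

/-- `C` stabilizes `P`: the four closed-loop transfer matrices are stable. -/
def Stabilizes (R : Type*) [CommRing R] [IsDomain R] {n m : ℕ}
    (P : Matrix (Fin n) (Fin m) (FractionRing R))
    (C : Matrix (Fin m) (Fin n) (FractionRing R)) : Prop :=
  (1 - P * C).det ≠ 0 ∧ (1 - C * P).det ≠ 0 ∧
    MatStable R (1 - P * C)⁻¹ ∧ MatStable R ((1 - P * C)⁻¹ * P) ∧
    MatStable R (C * (1 - P * C)⁻¹) ∧ MatStable R (1 - C * P)⁻¹

section Aux

variable {R : Type*} [CommRing R] [IsDomain R] {α β γ : Type*}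

lemma matStable_iff (M : Matrix α β (FractionRing R)) :
    MatStable R M ↔ ∀ i j, M i j ∈ (algebraMap R (FractionRing R)).range := by
  simp [MatStable, RingHom.mem_range]

lemma MatStable.mul [Fintype β] {M : Matrix α β (FractionRing R)}
    {N : Matrix β γ (FractionRing R)} (hM : MatStable R M) (hN : MatStable R N) :
    MatStable R (M * N) := by
  rw [matStable_iff] at *
  intro i j
  rw [Matrix.mul_apply]
  exact Subring.sum_mem _ fun k _ => mul_mem (hM i k) (hN k j)

lemma MatStable.add {M N : Matrix α β (FractionRing R)}
    (hM : MatStable R M) (hN : MatStable R N) : MatStable R (M + N) := by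
  rw [matStable_iff] at *
  exact fun i j => add_mem (hM i j) (hN i j)

lemma MatStable.sub {M N : Matrix α β (FractionRing R)}
    (hM : MatStable R M) (hN : MatStable R N) : MatStable R (M - N) := by
  rw [matStable_iff] at *
  exact fun i j => sub_mem (hM i j) (hN i j)

lemma matStable_one [DecidableEq α] : MatStable R (1 : Matrix α α (FractionRing R)) := by
  intro i j
  exact ⟨if i = j then 1 else 0, by simp [Matrix.one_apply, apply_ite]⟩

end Aux

theorem stmt12 (R : Type*) [CommRing R] [IsDomain R] (n m : ℕ)
    (P : Matrix (Fin n) (Fin m) (FractionRing R))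
    (Cs C₀ : Matrix (Fin m) (Fin n) (FractionRing R))
    (P₀ : Matrix (Fin n) (Fin m) (FractionRing R))
    (hP₀ : P₀ = P * (1 - Cs * P)⁻¹)
    (hs : Stabilizes R P Cs) (h0 : Stabilizes R P₀ C₀) :
    Stabilizes R P (Cs + C₀) := by
  obtain ⟨hA, hB, sA, sAP, sCsA, sB⟩ := hs
  obtain ⟨hA0, hB0, sA0, sA0P, sC0A0, sB0⟩ := h0
  set A : Matrix (Fin n) (Fin n) (FractionRing R) := 1 - P * Cs with hAdef
  set B : Matrix (Fin m) (Fin m) (FractionRing R) := 1 - Cs * P with hBdef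
  set A₀ : Matrix (Fin n) (Fin n) (FractionRing R) := 1 - P₀ * C₀ with hA0def
  set B₀ : Matrix (Fin m) (Fin m) (FractionRing R) := 1 - C₀ * P₀ with hB0def
  have hAinv : A⁻¹ * A = 1 := Matrix.nonsing_inv_mul A (isUnit_iff_ne_zero.mpr hA)
  have hAinv' : A * A⁻¹ = 1 := Matrix.mul_nonsing_inv A (isUnit_iff_ne_zero.mpr hA)
  have hBinv : B⁻¹ * B = 1 := Matrix.nonsing_inv_mul B (isUnit_iff_ne_zero.mpr hB)
  have hBinv' : B * B⁻¹ = 1 := Matrix.mul_nonsing_inv B (isUnit_iff_ne_zero.mpr hB)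
  have hA0inv : A₀⁻¹ * A₀ = 1 := Matrix.nonsing_inv_mul A₀ (isUnit_iff_ne_zero.mpr hA0)
  have hA0inv' : A₀ * A₀⁻¹ = 1 := Matrix.mul_nonsing_inv A₀ (isUnit_iff_ne_zero.mpr hA0)
  -- push-through: P₀ = P * B⁻¹ = A⁻¹ * P
  have hcomm : A * P = P * B := by
    simp only [hAdef, hBdef, Matrix.sub_mul, Matrix.mul_sub, Matrix.one_mul,
      Matrix.mul_one, Matrix.mul_assoc]
  have hP₀' : P₀ = A⁻¹ * P := by
    rw [hP₀]
    calc P * B⁻¹ = (A⁻¹ * A) * (P * B⁻¹) := by rw [hAinv, Matrix.one_mul]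
    _ = A⁻¹ * (A * P) * B⁻¹ := by simp only [Matrix.mul_assoc]
    _ = A⁻¹ * (P * B) * B⁻¹ := by rw [hcomm]
    _ = A⁻¹ * P * (B * B⁻¹) := by simp only [Matrix.mul_assoc]
    _ = A⁻¹ * P := by rw [hBinv', Matrix.mul_one]
  -- key factorizations
  have key1 : 1 - P * (Cs + C₀) = A * A₀ := by
    have : A * A₀ = A - (A * P₀) * C₀ := by
      simp only [hA0def, Matrix.mul_sub, Matrix.mul_one, Matrix.mul_assoc]
    rw [this, hP₀', ← Matrix.mul_assoc, hAinv', Matrix.one_mul]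
    simp only [hAdef, Matrix.mul_add]
    abel
  have key2 : 1 - (Cs + C₀) * P = B₀ * B := by
    have : B₀ * B = B - C₀ * (P₀ * B) := by
      simp only [hB0def, Matrix.sub_mul, Matrix.one_mul, Matrix.mul_assoc]
    rw [this, hP₀]
    rw [show P * B⁻¹ * B = P by rw [Matrix.mul_assoc, hBinv, Matrix.mul_one]]
    simp only [hBdef, Matrix.add_mul]
    abel
  -- determinants
  have hdet1 : (1 - P * (Cs + C₀)).det ≠ 0 := by
    rw [key1, Matrix.det_mul]
    exact mul_ne_zero hA hA0
  have hdet2 : (1 - (Cs + C₀) * P).det ≠ 0 := by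
    rw [key2, Matrix.det_mul]
    exact mul_ne_zero hB0 hB
  -- inverses of products
  have hinv1 : (1 - P * (Cs + C₀))⁻¹ = A₀⁻¹ * A⁻¹ := by
    rw [key1, Matrix.mul_inv_rev]
  have hinv2 : (1 - (Cs + C₀) * P)⁻¹ = B⁻¹ * B₀⁻¹ := by
    rw [key2, Matrix.mul_inv_rev]
  -- Cs * P₀ = B⁻¹ - 1 is stable
  have hCsP₀ : Cs * P₀ = B⁻¹ - 1 := by
    rw [hP₀, ← Matrix.mul_assoc]
    rw [show Cs * P = 1 - B by rw [hBdef]; abel]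
    rw [Matrix.sub_mul, Matrix.one_mul, hBinv']
  -- A₀⁻¹ = 1 + P₀ * (C₀ * A₀⁻¹)
  have hA0exp : A₀⁻¹ = 1 + P₀ * (C₀ * A₀⁻¹) := by
    have : A₀ * A₀⁻¹ = A₀⁻¹ - P₀ * (C₀ * A₀⁻¹) := by
      simp only [hA0def, Matrix.sub_mul, Matrix.one_mul, Matrix.mul_assoc]
    rw [this] at hA0inv'
    rw [← hA0inv']
    abel
  refine ⟨hdet1, hdet2, ?_, ?_, ?_, ?_⟩
  · rw [hinv1]
    exact sA0.mul sA
  · rw [hinv1, Matrix.mul_assoc]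
    exact sA0.mul sAP
  · rw [hinv1, Matrix.add_mul]
    have h1 : MatStable R (C₀ * (A₀⁻¹ * A⁻¹)) := by
      rw [← Matrix.mul_assoc]
      exact sC0A0.mul sA
    have h2 : MatStable R (Cs * (A₀⁻¹ * A⁻¹)) := by
      have : Cs * (A₀⁻¹ * A⁻¹) = Cs * A⁻¹ + (B⁻¹ - 1) * ((C₀ * A₀⁻¹) * A⁻¹) := by
        conv_lhs => rw [← Matrix.mul_assoc, hA0exp]
        rw [← hCsP₀]
        simp only [Matrix.mul_add, Matrix.add_mul, Matrix.mul_one, Matrix.one_mul,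
          Matrix.mul_assoc]
      rw [this]
      exact sCsA.add (((sB.sub matStable_one).mul (sC0A0.mul sA)))
    exact h2.add h1
  · rw [hinv2]
    exact sB.mul sB0
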